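/- If A and B are Vahlen matrices (elements of the Lipschitz group Γ(V ⊕ ℝ^{1,1}) viewed in Mat₂(Cl(V))), then the pseudo-determinant is multiplicative: Δ(AB) = Δ(A)Δ(B). -/

import Mathlib

open CliffordAlgebra

noncomputable def negQhat {V : Type*} [AddCommGroup V] [Module ℝ V]
    (Q : QuadraticForm ℝ V) : QuadraticForm ℝ (V × ℝ × ℝ) :=
  QuadraticMap.prod (-Q) (QuadraticMap.prod QuadraticMap.sq (-QuadraticMap.sq))

/-- The Clifford map `j : V ⊕ ℝ^{1,1} → Mat₂(Cl(V))` (convention `v² = -Q v`). -/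
noncomputable def jmat {V : Type*} [AddCommGroup V] [Module ℝ V]
    (Q : QuadraticForm ℝ V) (x : V × ℝ × ℝ) :
    Matrix (Fin 2) (Fin 2) (CliffordAlgebra (-Q)) :=
  !![ι (-Q) x.1, algebraMap ℝ _ (x.2.1 - x.2.2);
     algebraMap ℝ _ (x.2.1 + x.2.2), -ι (-Q) x.1]

/-- A Vahlen matrix: an element of `Mat₂(Cl(V))` corresponding, under the
`(1,1)`-periodicity isomorphism `F`, to an element of the Lipschitz group
`Γ(V ⊕ ℝ^{1,1})`, i.e. an invertible `g` with `g x ĝ⁻¹ ∈ V ⊕ ℝ^{1,1}` for all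
`x ∈ V ⊕ ℝ^{1,1}`. -/
def IsVahlen {V : Type*} [AddCommGroup V] [Module ℝ V] (Q : QuadraticForm ℝ V)
    (F : CliffordAlgebra (negQhat Q) ≃ₐ[ℝ] Matrix (Fin 2) (Fin 2) (CliffordAlgebra (-Q)))
    (A : Matrix (Fin 2) (Fin 2) (CliffordAlgebra (-Q))) : Prop :=
  IsUnit (F.symm A) ∧ ∀ x : V × ℝ × ℝ, ∃ y : V × ℝ × ℝ,
    F.symm A * ι (negQhat Q) x * Ring.inverse (involute (F.symm A)) = ι (negQhat Q) y

/-- The pseudo-determinant `Δ([[a,b],[c,d]]) = a d~ - b c~`. -/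
noncomputable def pdet {V : Type*} [AddCommGroup V] [Module ℝ V] (Q : QuadraticForm ℝ V)
    (A : Matrix (Fin 2) (Fin 2) (CliffordAlgebra (-Q))) : CliffordAlgebra (-Q) :=
  A 0 0 * reverse (A 1 1) - A 0 1 * reverse (A 1 0)


namespace VahlenAux

variable {M : Type*} [AddCommGroup M] [Module ℝ M] {Q' : QuadraticForm ℝ M}

/-- super-derivation product rule for left contraction -/
theorem contract_mul (d : Module.Dual ℝ M) (a : CliffordAlgebra Q') :
    ∀ b, contractLeft d (a * b) =
      contractLeft d a * b + involute a * contractLeft d b := by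
  induction a using CliffordAlgebra.induction with
  | algebraMap r =>
    intro b
    rw [contractLeft_algebraMap_mul, contractLeft_algebraMap, AlgHom.commutes, zero_mul, zero_add]
  | ι m =>
    intro b
    rw [contractLeft_ι_mul, contractLeft_ι, involute_ι, Algebra.smul_def, neg_mul, sub_eq_add_neg]
  | add x y hx hy =>
    intro b
    rw [add_mul, map_add, map_add, map_add, add_mul, add_mul, hx, hy]
    abel
  | mul x y hx hy =>
    intro b
    rw [mul_assoc, hx, hy, hx y]
    simp only [map_mul, mul_add, add_mul, mul_assoc]
    abel

/-- the twisted commutator with a vector is contraction by its polar dual -/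
theorem ι_mul_sub_involute (m : M) (x : CliffordAlgebra Q') :
    ι Q' m * x - involute x * ι Q' m = contractLeft (QuadraticMap.polarBilin Q' m) x := by
  induction x using CliffordAlgebra.induction with
  | algebraMap r =>
    rw [contractLeft_algebraMap, AlgHom.commutes, Algebra.commutes, sub_self]
  | ι u =>
    rw [involute_ι, contractLeft_ι, neg_mul, sub_neg_eq_add, ι_mul_ι_add_swap]
    rfl
  | add x y hx hy =>
    rw [map_add, map_add, mul_add, add_mul, ← hx, ← hy]
    abel
  | mul x y hx hy =>
    rw [contract_mul, ← hx, ← hy]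
    simp only [map_mul, sub_mul, mul_sub, mul_assoc]
    abel


/-- `A s` : subalgebra generated by vectors in `s`. -/
noncomputable def Asub (Q' : QuadraticForm ℝ M) (s : Set M) : Subalgebra ℝ (CliffordAlgebra Q') :=
  Algebra.adjoin ℝ (ι Q' '' s)

theorem involute_mem_Asub {s : Set M} {x : CliffordAlgebra Q'} (hx : x ∈ Asub Q' s) :
    involute x ∈ Asub Q' s := by
  induction hx using Algebra.adjoin_induction with
  | mem a ha =>
    obtain ⟨v, hv, rfl⟩ := ha
    rw [involute_ι]
    exact neg_mem (Algebra.subset_adjoin ⟨v, hv, rfl⟩)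
  | algebraMap r => rw [AlgHom.commutes]; exact algebraMap_mem _ r
  | add a b _ _ ha hb => rw [map_add]; exact add_mem ha hb
  | mul a b _ _ ha hb => rw [map_mul]; exact mul_mem ha hb

theorem contract_mem_Asub (d : Module.Dual ℝ M) {s : Set M} {x : CliffordAlgebra Q'}
    (hx : x ∈ Asub Q' s) : contractLeft d x ∈ Asub Q' s := by
  induction hx using Algebra.adjoin_induction with
  | mem a ha =>
    obtain ⟨v, hv, rfl⟩ := ha
    rw [contractLeft_ι]
    exact algebraMap_mem _ _
  | algebraMap r => rw [contractLeft_algebraMap]; exact zero_mem _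
  | add a b _ _ ha hb => rw [map_add]; exact add_mem ha hb
  | mul a b hma hmb ha hb =>
    rw [contract_mul]
    exact add_mem (mul_mem ha hmb) (mul_mem (involute_mem_Asub hma) hb)

theorem contract_eq_zero_of_Asub (d : Module.Dual ℝ M) {s : Set M}
    (hd : ∀ v ∈ s, d v = 0) {x : CliffordAlgebra Q'} (hx : x ∈ Asub Q' s) :
    contractLeft d x = 0 := by
  induction hx using Algebra.adjoin_induction with
  | mem a ha =>
    obtain ⟨v, hv, rfl⟩ := ha
    rw [contractLeft_ι, hd v hv, map_zero]
  | algebraMap r => rw [contractLeft_algebraMap]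
  | add a b _ _ ha hb => rw [map_add, ha, hb, add_zero]
  | mul a b _ _ ha hb => rw [contract_mul, ha, hb, zero_mul, mul_zero, add_zero]

/-- decomposition over one extra generator -/
theorem Asub_insert {b : M} {s : Set M} {x : CliffordAlgebra Q'}
    (hx : x ∈ Asub Q' (insert b s)) :
    ∃ y ∈ Asub Q' s, ∃ z ∈ Asub Q' s, x = y + ι Q' b * z := by
  let U : Submodule ℝ (CliffordAlgebra Q') :=
    Subalgebra.toSubmodule (Asub Q' s) ⊔
      Submodule.map (LinearMap.mulLeft ℝ (ι Q' b)) (Subalgebra.toSubmodule (Asub Q' s))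
  have hmem : ∀ w ∈ U, ∃ y ∈ Asub Q' s, ∃ z ∈ Asub Q' s, w = y + ι Q' b * z := by
    intro w hw
    rw [Submodule.mem_sup] at hw
    obtain ⟨y, hy, z', hz', rfl⟩ := hw
    obtain ⟨z, hz, rfl⟩ := hz'
    exact ⟨y, hy, z, hz, rfl⟩
  have hmem' : ∀ (y z : CliffordAlgebra Q'), y ∈ Asub Q' s → z ∈ Asub Q' s →
      y + ι Q' b * z ∈ U := by
    intro y z hy hz
    exact Submodule.add_mem_sup hy ⟨z, hz, rfl⟩
  -- commuting a vector past an element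
  have hcomm : ∀ y : CliffordAlgebra Q', y * ι Q' b =
      ι Q' b * involute y - contractLeft (QuadraticMap.polarBilin Q' b) (involute y) := by
    intro y
    have h := ι_mul_sub_involute b (involute y)
    rw [involute_involute] at h
    rw [← h]
    abel
  have hU : x ∈ U := by
    induction hx using Algebra.adjoin_induction with
    | mem a ha =>
      obtain ⟨v, hv, rfl⟩ := ha
      rcases Set.mem_insert_iff.mp hv with rfl | hv'
      · have : ι Q' v = 0 + ι Q' v * 1 := by rw [zero_add, mul_one]
        rw [this]
        refine hmem' 0 1 (zero_mem _) ?_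
        exact one_mem (Asub Q' s)
      · exact Submodule.mem_sup_left (Algebra.subset_adjoin ⟨v, hv', rfl⟩)
    | algebraMap r => exact Submodule.mem_sup_left ((Asub Q' s).algebraMap_mem r)
    | add a c _ _ ha hc => exact add_mem ha hc
    | mul a c _ _ ha hc =>
      obtain ⟨y₁, hy₁, z₁, hz₁, rfl⟩ := hmem a ha
      obtain ⟨y₂, hy₂, z₂, hz₂, rfl⟩ := hmem c hc
      have expand : (y₁ + ι Q' b * z₁) * (y₂ + ι Q' b * z₂) =
          (y₁ * y₂ - contractLeft (QuadraticMap.polarBilin Q' b) (involute y₁) * z₂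
            + algebraMap ℝ _ (Q' b) * (involute z₁ * z₂))
          + ι Q' b * (involute y₁ * z₂ + z₁ * y₂
              - contractLeft (QuadraticMap.polarBilin Q' b) (involute z₁) * z₂) := by
        have h1 : y₁ * (ι Q' b * z₂) = ι Q' b * (involute y₁ * z₂)
            - contractLeft (QuadraticMap.polarBilin Q' b) (involute y₁) * z₂ := by
          rw [← mul_assoc, hcomm y₁, sub_mul, mul_assoc]
        have h2 : (ι Q' b * z₁) * (ι Q' b * z₂) =
            algebraMap ℝ _ (Q' b) * (involute z₁ * z₂)
            - ι Q' b * (contractLeft (QuadraticMap.polarBilin Q' b) (involute z₁) * z₂) := by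
          rw [← mul_assoc, mul_assoc (ι Q' b) z₁ (ι Q' b), hcomm z₁, mul_sub, sub_mul,
            ← mul_assoc (ι Q' b) (ι Q' b) (involute z₁), ι_sq_scalar]
          simp only [mul_assoc]
        rw [add_mul, mul_add, mul_add, h1, h2]
        simp only [mul_add, mul_sub, mul_assoc]
        abel
      rw [expand]
      refine hmem' _ _ ?_ ?_
      · refine add_mem (sub_mem (mul_mem hy₁ hy₂)
          (mul_mem (contract_mem_Asub _ (involute_mem_Asub hy₁)) hz₂))
          (mul_mem (algebraMap_mem _ _) (mul_mem (involute_mem_Asub hz₁) hz₂))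
      · exact sub_mem (add_mem (mul_mem (involute_mem_Asub hy₁) hz₂) (mul_mem hz₁ hy₂))
          (mul_mem (contract_mem_Asub _ (involute_mem_Asub hz₁)) hz₂)
  exact hmem x hU


theorem Asub_mono {s t : Set M} (h : s ⊆ t) : Asub Q' s ≤ Asub Q' t :=
  Algebra.adjoin_mono (Set.image_mono h)

theorem exists_finset (x : CliffordAlgebra Q') :
    ∃ s : Set M, s.Finite ∧ x ∈ Asub Q' s := by
  induction x using CliffordAlgebra.induction with
  | algebraMap r => exact ⟨∅, Set.finite_empty, (Asub Q' _).algebraMap_mem r⟩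
  | ι m => exact ⟨{m}, Set.finite_singleton m, Algebra.subset_adjoin ⟨m, rfl, rfl⟩⟩
  | add a b ha hb =>
    obtain ⟨s, hsf, hs⟩ := ha; obtain ⟨t, htf, ht⟩ := hb
    exact ⟨s ∪ t, hsf.union htf, add_mem (Asub_mono Set.subset_union_left hs)
      (Asub_mono Set.subset_union_right ht)⟩
  | mul a b ha hb =>
    obtain ⟨s, hsf, hs⟩ := ha; obtain ⟨t, htf, ht⟩ := hb
    exact ⟨s ∪ t, hsf.union htf, mul_mem (Asub_mono Set.subset_union_left hs)
      (Asub_mono Set.subset_union_right ht)⟩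

theorem Asub_le_of_span {s t : Set M} (h : s ⊆ (Submodule.span ℝ t : Set M)) :
    Asub Q' s ≤ Asub Q' t := by
  apply Algebra.adjoin_le
  rintro _ ⟨v, hv, rfl⟩
  have h1 : ι Q' v ∈ Submodule.span ℝ (ι Q' '' t) :=
    Submodule.apply_mem_span_image_of_mem_span _ (h hv)
  have h2 : Submodule.span ℝ (ι Q' '' t) ≤ Subalgebra.toSubmodule (Asub Q' t) :=
    Submodule.span_le.mpr Algebra.subset_adjoin
  exact h2 h1

/-- the key inductive step: peel off dual-system generators one at a time -/
theorem scalar_of_dual_system {ι' : Type*} [DecidableEq ι'] (v : ι' → M)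
    (d : ι' → Module.Dual ℝ M) (hd : ∀ i j, d i (v j) = if i = j then 1 else 0) :
    ∀ l : List ι', l.Nodup → ∀ x ∈ Asub Q' (v '' {i | i ∈ l}),
      (∀ i, contractLeft (d i) x = 0) → ∃ r : ℝ, x = algebraMap ℝ _ r := by
  intro l
  induction l with
  | nil =>
    intro _ x hx _
    have himg : v '' {i | i ∈ ([] : List ι')} = ∅ := by simp
    rw [himg] at hx
    have hbot : x ∈ (⊥ : Subalgebra ℝ (CliffordAlgebra Q')) := by
      rw [← Algebra.adjoin_empty ℝ (CliffordAlgebra Q')]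
      simpa [Asub, Set.image_empty] using hx
    obtain ⟨r, hr⟩ := Algebra.mem_bot.mp hbot
    exact ⟨r, hr.symm⟩
  | cons i t ih =>
    intro hnd x hx hkill
    have himg : v '' {j | j ∈ i :: t} = insert (v i) (v '' {j | j ∈ t}) := by
      simp only [List.mem_cons]
      rw [show {j | j = i ∨ j ∈ t} = insert i {j | j ∈ t} from rfl, Set.image_insert_eq]
    rw [himg] at hx
    obtain ⟨y, hy, z, hz, rfl⟩ := Asub_insert hx
    have hvanish : ∀ w ∈ v '' {j | j ∈ t}, d i w = 0 := by
      rintro _ ⟨j, hj, rfl⟩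
      rw [hd i j, if_neg]
      rintro rfl
      exact (List.nodup_cons.mp hnd).1 hj
    have hdy : contractLeft (d i) y = 0 := contract_eq_zero_of_Asub _ hvanish hy
    have hdz : contractLeft (d i) z = 0 := contract_eq_zero_of_Asub _ hvanish hz
    have hz0 : z = 0 := by
      have h := hkill i
      rw [map_add, hdy, contractLeft_ι_mul, hdz, mul_zero, sub_zero, hd i i, if_pos rfl,
        one_smul, zero_add] at h
      exact h
    rw [hz0, mul_zero, add_zero] at hkill ⊢
    exact ih (List.nodup_cons.mp hnd).2 y hy hkill

/-- MAIN centrality lemma -/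
theorem exists_scalar_of_contract_zero
    (hnd : ∀ w : M, (∀ u : M, QuadraticMap.polar Q' w u = 0) → w = 0)
    {x : CliffordAlgebra Q'}
    (hx : ∀ m : M, contractLeft (QuadraticMap.polarBilin Q' m) x = 0) :
    ∃ r : ℝ, x = algebraMap ℝ _ r := by
  obtain ⟨s, hsf, hs⟩ := exists_finset x
  set W := Submodule.span ℝ s with hW
  haveI : FiniteDimensional ℝ W := FiniteDimensional.span_of_finite ℝ hsf
  let φ : M →ₗ[ℝ] Module.Dual ℝ W :=
    (LinearMap.lcomp ℝ ℝ W.subtype).comp (QuadraticMap.polarBilin Q')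
  have hφ : ∀ m (w : W), φ m w = QuadraticMap.polar Q' m w := fun m w => rfl
  have hsurj : LinearMap.range φ = ⊤ := by
    have hco : (LinearMap.range φ).dualCoannihilator = ⊥ := by
      rw [Submodule.eq_bot_iff]
      intro w hw
      rw [Submodule.mem_dualCoannihilator] at hw
      have hz : ∀ u : M, QuadraticMap.polar Q' (w : M) u = 0 := by
        intro u
        have h := hw (φ u) (LinearMap.mem_range_self φ u)
        rw [hφ] at h
        rw [QuadraticMap.polar_comm]
        exact h
      exact Subtype.ext (hnd _ hz)
    have h1 := Subspace.finrank_add_finrank_dualCoannihilator_eq (LinearMap.range φ)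
    rw [hco, finrank_bot, add_zero] at h1
    apply Submodule.eq_top_of_finrank_eq
    rw [h1, Subspace.dual_finrank_eq]
  have hsurj' : Function.Surjective φ := LinearMap.range_eq_top.mp hsurj
  let b := Module.finBasis ℝ W
  let m : Fin (Module.finrank ℝ W) → M := fun i => (hsurj' (b.coord i)).choose
  have hm : ∀ i, φ (m i) = b.coord i := fun i => (hsurj' (b.coord i)).choose_spec
  let v : Fin (Module.finrank ℝ W) → M := fun i => (b i : M)
  have hd : ∀ i j, QuadraticMap.polarBilin Q' (m i) (v j) = if i = j then 1 else 0 := by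
    intro i j
    have h1 : QuadraticMap.polarBilin Q' (m i) (v j) = φ (m i) (b j) := rfl
    rw [h1, hm i, Module.Basis.coord_apply, Module.Basis.repr_self, Finsupp.single_apply]
    simp [eq_comm]
  have hxmem : x ∈ Asub Q' (v '' {i | i ∈ List.finRange (Module.finrank ℝ W)}) := by
    have himg : v '' {i | i ∈ List.finRange (Module.finrank ℝ W)} = Set.range v := by
      rw [show {i : Fin (Module.finrank ℝ W) | i ∈ List.finRange _} = Set.univ by
        ext i; simp [List.mem_finRange], Set.image_univ]
    rw [himg]
    have hspan : Submodule.span ℝ (Set.range v) = W := by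
      have hrv : Set.range v = W.subtype '' Set.range b := by
        rw [← Set.range_comp]; rfl
      rw [hrv, Submodule.span_image, b.span_eq, Submodule.map_top, Submodule.range_subtype]
    refine Asub_le_of_span ?_ hs
    intro w hw
    rw [hspan]
    exact Submodule.subset_span hw
  exact scalar_of_dual_system v (fun i => QuadraticMap.polarBilin Q' (m i)) hd
    _ (List.nodup_finRange _) x hxmem (fun i => hx (m i))


theorem scalar_of_twisted_central
    (hnd : ∀ w : M, (∀ u : M, QuadraticMap.polar Q' w u = 0) → w = 0)
    {z : CliffordAlgebra Q'} (hz : ∀ x : M, z * ι Q' x = ι Q' x * involute z) :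
    ∃ r : ℝ, z = algebraMap ℝ _ r := by
  have hw : ∀ m : M, contractLeft (QuadraticMap.polarBilin Q' m) (involute z) = 0 := by
    intro m
    rw [← ι_mul_sub_involute, involute_involute, hz m, sub_self]
  obtain ⟨r, hr⟩ := exists_scalar_of_contract_zero hnd hw
  refine ⟨r, ?_⟩
  have h := congrArg (involute (Q := Q')) hr
  rwa [involute_involute, AlgHom.commutes] at h

/-- The key norm computation for Lipschitz elements. -/
theorem mul_sigma_eq_scalar
    (hnd : ∀ w : M, (∀ u : M, QuadraticMap.polar Q' w u = 0) → w = 0)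
    (u : (CliffordAlgebra Q')ˣ)
    (hcond : ∀ x : M, ∃ y : M,
      (u : CliffordAlgebra Q') * ι Q' x * Ring.inverse (involute (u : CliffordAlgebra Q')) = ι Q' y) :
    ∃ c : ℝ, (u : CliffordAlgebra Q') * reverse (involute (u : CliffordAlgebra Q')) =
      algebraMap ℝ _ c := by
  let f : CliffordAlgebra Q' →* CliffordAlgebra Q' :=
    (involute (Q := Q') : CliffordAlgebra Q' →ₐ[ℝ] CliffordAlgebra Q').toRingHom.toMonoidHom
  let uα : (CliffordAlgebra Q')ˣ := Units.map f u
  have coe_uα : (uα : CliffordAlgebra Q') = involute (u : CliffordAlgebra Q') := rfl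
  have coe_uα_inv : ((uα⁻¹ : (CliffordAlgebra Q')ˣ) : CliffordAlgebra Q') =
      involute ((u⁻¹ : (CliffordAlgebra Q')ˣ) : CliffordAlgebra Q') := by
    rw [← map_inv (Units.map f) u]; rfl
  have hRinv : Ring.inverse (involute (u : CliffordAlgebra Q')) =
      ((uα⁻¹ : (CliffordAlgebra Q')ˣ) : CliffordAlgebra Q') := by
    rw [← coe_uα, Ring.inverse_unit]
  have hc : ∀ x : M, ∃ y : M, (u : CliffordAlgebra Q') * ι Q' x *
      ((uα⁻¹ : (CliffordAlgebra Q')ˣ) : CliffordAlgebra Q') = ι Q' y := by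
    intro x; obtain ⟨y, hy⟩ := hcond x; exact ⟨y, by rw [← hRinv]; exact hy⟩
  -- `e2 x y : involute u * ι x * u⁻¹ = ι y` whenever `hy` holds
  have e2 : ∀ x y, (u : CliffordAlgebra Q') * ι Q' x *
        ((uα⁻¹ : (CliffordAlgebra Q')ˣ) : CliffordAlgebra Q') = ι Q' y →
      involute (u : CliffordAlgebra Q') * ι Q' x *
        ((u⁻¹ : (CliffordAlgebra Q')ˣ) : CliffordAlgebra Q') = ι Q' y := by
    intro x y hy
    have h := congrArg (involute (Q := Q')) hy
    simp only [map_mul, involute_ι] at h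
    rw [coe_uα_inv, involute_involute, mul_neg, neg_mul] at h
    exact neg_injective h
  -- fact 1 : u⁻¹ * uα is twisted-central
  have h1 : ∀ x : M, ((u⁻¹ * uα : (CliffordAlgebra Q')ˣ) : CliffordAlgebra Q') * ι Q' x =
      ι Q' x * involute ((u⁻¹ * uα : (CliffordAlgebra Q')ˣ) : CliffordAlgebra Q') := by
    intro x
    obtain ⟨y, hy⟩ := hc x
    have e2' := e2 x y hy
    have e5 : involute (u : CliffordAlgebra Q') * ι Q' x =
        ι Q' y * (u : CliffordAlgebra Q') := by
      have := congrArg (· * (u : CliffordAlgebra Q')) e2'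
      simpa [mul_assoc] using this
    have hαcoe : involute ((u⁻¹ * uα : (CliffordAlgebra Q')ˣ) : CliffordAlgebra Q') =
        ((uα⁻¹ : (CliffordAlgebra Q')ˣ) : CliffordAlgebra Q') * (u : CliffordAlgebra Q') := by
      rw [Units.val_mul, map_mul, ← coe_uα_inv, coe_uα, involute_involute]
    rw [hαcoe, Units.val_mul, mul_assoc, coe_uα, e5, ← mul_assoc, ← hy]
    simp [mul_assoc]
  -- fact 2 : reverse u * u is twisted-central
  have h2 : ∀ x : M, (reverse (u : CliffordAlgebra Q') * (u : CliffordAlgebra Q')) * ι Q' x =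
      ι Q' x * involute (reverse (u : CliffordAlgebra Q') * (u : CliffordAlgebra Q')) := by
    intro x
    obtain ⟨y, hy⟩ := hc x
    have e2' := e2 x y hy
    have e3 : reverse ((u⁻¹ : (CliffordAlgebra Q')ˣ) : CliffordAlgebra Q') *
        (ι Q' x * reverse (involute (u : CliffordAlgebra Q'))) = ι Q' y := by
      have h := congrArg (reverse (Q := Q')) e2'
      simpa only [reverse.map_mul, reverse_ι] using h
    have e4 : ι Q' x * reverse (involute (u : CliffordAlgebra Q')) =
        reverse (u : CliffordAlgebra Q') * ι Q' y := by
      have h9 : reverse (u : CliffordAlgebra Q') *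
          reverse ((u⁻¹ : (CliffordAlgebra Q')ˣ) : CliffordAlgebra Q') = 1 := by
        rw [← reverse.map_mul, Units.inv_mul, reverse.map_one]
      calc ι Q' x * reverse (involute (u : CliffordAlgebra Q'))
          = 1 * (ι Q' x * reverse (involute (u : CliffordAlgebra Q'))) := (one_mul _).symm
        _ = reverse (u : CliffordAlgebra Q') *
            (reverse ((u⁻¹ : (CliffordAlgebra Q')ˣ) : CliffordAlgebra Q') *
              (ι Q' x * reverse (involute (u : CliffordAlgebra Q')))) := by
            rw [← h9, mul_assoc]
        _ = reverse (u : CliffordAlgebra Q') * ι Q' y := by rw [e3]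
    have e6 : ι Q' y * involute (u : CliffordAlgebra Q') = (u : CliffordAlgebra Q') * ι Q' x := by
      rw [← coe_uα, ← hy, mul_assoc, Units.inv_mul, mul_one]
    rw [map_mul]
    have hinvrev : involute (reverse (u : CliffordAlgebra Q')) =
        reverse (involute (u : CliffordAlgebra Q')) :=
      (reverse_involute _).symm
    rw [hinvrev, ← mul_assoc, e4,
      mul_assoc (reverse (u : CliffordAlgebra Q')) (ι Q' y) (involute (u : CliffordAlgebra Q')),
      e6, ← mul_assoc]
  obtain ⟨r, hr⟩ := scalar_of_twisted_central hnd h1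
  obtain ⟨t, ht⟩ := scalar_of_twisted_central hnd h2
  refine ⟨r * t, ?_⟩
  have huα : involute (u : CliffordAlgebra Q') =
      (u : CliffordAlgebra Q') * algebraMap ℝ _ r := by
    have h := congrArg ((u : CliffordAlgebra Q') * ·) hr
    rw [Units.val_mul, Units.mul_inv_cancel_left] at h
    rw [← coe_uα, h]
  have h10 : reverse (u : CliffordAlgebra Q') =
      algebraMap ℝ _ t * ((u⁻¹ : (CliffordAlgebra Q')ˣ) : CliffordAlgebra Q') := by
    have h := congrArg (· * ((u⁻¹ : (CliffordAlgebra Q')ˣ) : CliffordAlgebra Q')) ht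
    rw [mul_assoc, Units.mul_inv, mul_one] at h
    exact h
  have h11 : (u : CliffordAlgebra Q') * reverse (u : CliffordAlgebra Q') =
      algebraMap ℝ _ t := by
    rw [h10, ← mul_assoc, ← Algebra.commutes t (u : CliffordAlgebra Q'), mul_assoc,
      Units.mul_inv, mul_one]
  rw [huα, reverse.map_mul, reverse.commutes, ← mul_assoc,
    ← Algebra.commutes r (u : CliffordAlgebra Q'), mul_assoc, h11, ← map_mul]


section Matrices

variable {V : Type*} [AddCommGroup V] [Module ℝ V] (Q : QuadraticForm ℝ V)

theorem negQhat_apply (z : V × ℝ × ℝ) :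
    negQhat Q z = -(Q z.1) + (z.2.1 * z.2.1 - z.2.2 * z.2.2) := by
  simp [negQhat, QuadraticMap.prod_apply, QuadraticMap.sq_apply, QuadraticMap.neg_apply,
    sub_eq_add_neg]

theorem negQhat_polar (w u : V × ℝ × ℝ) :
    QuadraticMap.polar (⇑(negQhat Q)) w u =
      -QuadraticMap.polar (⇑Q) w.1 u.1 + (2 * w.2.1 * u.2.1 - 2 * w.2.2 * u.2.2) := by
  simp only [QuadraticMap.polar, negQhat_apply, Prod.fst_add, Prod.snd_add]
  ring

theorem negQhat_nondeg (hQnd : ∀ w : V, (∀ u : V, QuadraticMap.polar (⇑Q) w u = 0) → w = 0)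
    (w : V × ℝ × ℝ) (hw : ∀ u : V × ℝ × ℝ, QuadraticMap.polar (⇑(negQhat Q)) w u = 0) :
    w = 0 := by
  have h1 : w.1 = 0 := by
    apply hQnd
    intro u
    have h := hw (u, 0, 0)
    rw [negQhat_polar] at h
    simp at h
    exact h
  have h2 : w.2.1 = 0 := by
    have h := hw (0, 1, 0)
    rw [negQhat_polar] at h
    simp [QuadraticMap.polar_zero_right] at h
    linarith
  have h3 : w.2.2 = 0 := by
    have h := hw (0, 0, 1)
    rw [negQhat_polar] at h
    simp [QuadraticMap.polar_zero_right] at h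
    linarith
  have : w = (w.1, w.2.1, w.2.2) := rfl
  rw [this, h1, h2, h3]
  rfl



/-- matrix-level Clifford conjugation -/
noncomputable def Phi (X : Matrix (Fin 2) (Fin 2) (CliffordAlgebra (-Q))) :
    Matrix (Fin 2) (Fin 2) (CliffordAlgebra (-Q)) :=
  !![reverse (X 1 1), -reverse (X 0 1); -reverse (X 1 0), reverse (X 0 0)]

theorem Phi_antimul (M N : Matrix (Fin 2) (Fin 2) (CliffordAlgebra (-Q))) :
    Phi Q (M * N) = Phi Q N * Phi Q M := by
  ext i j
  fin_cases i <;> fin_cases j <;>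
    simp [Phi, Matrix.mul_apply, Fin.sum_univ_two, reverse.map_mul, map_add] <;> abel

theorem Phi_add (M N : Matrix (Fin 2) (Fin 2) (CliffordAlgebra (-Q))) :
    Phi Q (M + N) = Phi Q M + Phi Q N := by
  ext i j
  fin_cases i <;> fin_cases j <;> simp [Phi, map_add] <;> abel

theorem Phi_algebraMap (r : ℝ) :
    Phi Q (algebraMap ℝ (Matrix (Fin 2) (Fin 2) (CliffordAlgebra (-Q))) r) =
      algebraMap ℝ _ r := by
  ext i j
  fin_cases i <;> fin_cases j <;>
    simp [Phi, Matrix.algebraMap_matrix_apply, reverse.commutes]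

theorem Phi_jmat (x : V × ℝ × ℝ) : Phi Q (jmat Q x) = -jmat Q x := by
  ext i j
  fin_cases i <;> fin_cases j <;>
    simp [Phi, jmat, reverse.commutes, map_neg]

theorem pdet_eq_entry (X : Matrix (Fin 2) (Fin 2) (CliffordAlgebra (-Q))) :
    pdet Q X = (X * Phi Q X) 0 0 := by
  simp [pdet, Phi, Matrix.mul_apply, Fin.sum_univ_two, sub_eq_add_neg]

variable (F : CliffordAlgebra (negQhat Q) ≃ₐ[ℝ] Matrix (Fin 2) (Fin 2) (CliffordAlgebra (-Q)))

theorem F_sigma (hF : ∀ x : V × ℝ × ℝ, F (ι (negQhat Q) x) = jmat Q x)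
    (u : CliffordAlgebra (negQhat Q)) :
    F (reverse (involute u)) = Phi Q (F u) := by
  induction u using CliffordAlgebra.induction with
  | algebraMap r =>
    rw [AlgHom.commutes, reverse.commutes, AlgEquiv.commutes]
    exact (Phi_algebraMap Q r).symm
  | ι x =>
    rw [involute_ι, map_neg, reverse_ι, map_neg, hF]
    exact (Phi_jmat Q x).symm
  | add a b ha hb =>
    rw [map_add, map_add, map_add, map_add, ha, hb, Phi_add]
  | mul a b ha hb =>
    have hσ : reverse (involute (a * b)) =
        reverse (involute b) * reverse (involute a) := by
      rw [map_mul]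
      exact reverse.map_mul _ _
    rw [hσ, map_mul, ha, hb, map_mul, Phi_antimul]

end Matrices

end VahlenAux

theorem pdet_mul (V : Type*) [AddCommGroup V] [Module ℝ V]
    (Q : QuadraticForm ℝ V)
    (hQnd : ∀ w : V, (∀ u : V, QuadraticMap.polar Q w u = 0) → w = 0)
    (F : CliffordAlgebra (negQhat Q) ≃ₐ[ℝ] Matrix (Fin 2) (Fin 2) (CliffordAlgebra (-Q)))
    (hF : ∀ x : V × ℝ × ℝ, F (ι (negQhat Q) x) = jmat Q x)
    (A B : Matrix (Fin 2) (Fin 2) (CliffordAlgebra (-Q)))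
    (hA : IsVahlen Q F A) (hB : IsVahlen Q F B) :
    pdet Q (A * B) = pdet Q A * pdet Q B := by
  obtain ⟨hAu, hAc⟩ := hA
  obtain ⟨hBu, hBc⟩ := hB
  have hnd' := VahlenAux.negQhat_nondeg Q hQnd
  -- scalars for A and B
  have huA : (hAu.unit : CliffordAlgebra (negQhat Q)) = F.symm A := hAu.unit_spec
  have huB : (hBu.unit : CliffordAlgebra (negQhat Q)) = F.symm B := hBu.unit_spec
  obtain ⟨cA, hcA⟩ := VahlenAux.mul_sigma_eq_scalar hnd' hAu.unit (by
    intro x; obtain ⟨y, hy⟩ := hAc x; exact ⟨y, by rw [huA]; exact hy⟩)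
  obtain ⟨cB, hcB⟩ := VahlenAux.mul_sigma_eq_scalar hnd' hBu.unit (by
    intro x; obtain ⟨y, hy⟩ := hBc x; exact ⟨y, by rw [huB]; exact hy⟩)
  rw [huA] at hcA
  rw [huB] at hcB
  -- scalar for the product
  have hprod : (F.symm A * F.symm B) *
      reverse (involute (F.symm A * F.symm B)) = algebraMap ℝ _ (cA * cB) := by
    have hσ : reverse (involute (F.symm A * F.symm B)) =
        reverse (involute (F.symm B)) * reverse (involute (F.symm A)) := by
      rw [map_mul]
      exact reverse.map_mul _ _
    rw [hσ, ← mul_assoc, mul_assoc (F.symm A) (F.symm B), hcB, ← Algebra.commutes cB (F.symm A),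
      mul_assoc, hcA, ← map_mul, mul_comm cB cA]
  -- evaluation of pdet through F
  have key : ∀ (X : Matrix (Fin 2) (Fin 2) (CliffordAlgebra (-Q))) (c : ℝ),
      F.symm X * reverse (involute (F.symm X)) = algebraMap ℝ _ c →
      pdet Q X = algebraMap ℝ _ c := by
    intro X c hX
    have h1 : VahlenAux.Phi Q X = F (reverse (involute (F.symm X))) := by
      conv_lhs => rw [← F.apply_symm_apply X]
      rw [VahlenAux.F_sigma Q F hF]
    have h3 : X * F (reverse (involute (F.symm X))) =
        algebraMap ℝ (Matrix (Fin 2) (Fin 2) (CliffordAlgebra (-Q))) c := by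
      rw [show X * F (reverse (involute (F.symm X))) =
          F (F.symm X) * F (reverse (involute (F.symm X))) by rw [F.apply_symm_apply],
        ← map_mul, hX, AlgEquiv.commutes]
    rw [VahlenAux.pdet_eq_entry, h1, h3, Matrix.algebraMap_matrix_apply]
    simp
  have kAB := key (A * B) (cA * cB) (by rw [map_mul]; exact hprod)
  have kA := key A cA hcA
  have kB := key B cB hcB
  rw [kAB, kA, kB, ← map_mul]
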